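/- Let k be an algebraically closed field, let n ≥ 1, and let h₁, …, hₙ be polynomials in k[z₁, …, zₙ] such that for each i there is an integer dᵢ ≥ 1 with the total degree of hᵢ − zᵢ^{dᵢ} strictly less than dᵢ. Then the set of common zeros { z ∈ kⁿ : hᵢ(z) = 0 for all i } is finite (and nonempty). -/

import Mathlib

open MvPolynomial

namespace Cor53Aux

variable {k : Type*} [Field k] {n : ℕ}

/-- `p` is zero or has total degree `< m`. -/
def Small (m : ℕ) (p : MvPolynomial (Fin n) k) : Prop := p ≠ 0 → p.totalDegree < m

lemma Small.add {m : ℕ} {p q : MvPolynomial (Fin n) k} (hp : Small m p) (hq : Small m q) :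
    Small m (p + q) := by
  intro hpq
  rcases eq_or_ne p 0 with rfl | hp0
  · simpa using hq (by simpa using hpq)
  rcases eq_or_ne q 0 with rfl | hq0
  · simpa using hp (by simpa using hpq)
  exact lt_of_le_of_lt (totalDegree_add p q) (max_lt (hp hp0) (hq hq0))

lemma Small.mul {m m' : ℕ} {p q : MvPolynomial (Fin n) k} (hp : Small m p)
    (hq : q ≠ 0 → q.totalDegree ≤ m') : Small (m + m') (p * q) := by
  intro hpq
  have hp0 : p ≠ 0 := fun hx => hpq (by simp [hx])
  have hq0 : q ≠ 0 := fun hx => hpq (by simp [hx])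
  exact lt_of_le_of_lt (totalDegree_mul p q) (Nat.add_lt_add_of_lt_of_le (hp hp0) (hq hq0))

lemma Small.congr {m m' : ℕ} {p : MvPolynomial (Fin n) k} (hp : Small m p) (e : m = m') :
    Small m' p := e ▸ hp

variable (d : Fin n → ℕ) (h : Fin n → MvPolynomial (Fin n) k)

/-- The multi-exponent `i ↦ d i * a i`. -/
noncomputable def mdeg (a : Fin n →₀ ℕ) : Fin n →₀ ℕ :=
  Finsupp.equivFunOnFinite.symm fun i => d i * a i

lemma mdeg_apply (a : Fin n →₀ ℕ) (i : Fin n) : mdeg d a i = d i * a i := rfl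

lemma mdeg_sum (a : Fin n →₀ ℕ) : ((mdeg d a).sum fun _ e => e) = ∑ i, d i * a i := by
  rw [Finsupp.sum_fintype _ _ fun _ => rfl]
  exact Finset.sum_congr rfl fun i _ => rfl

/-- weight of a multi-exponent -/
def wt (a : Fin n →₀ ℕ) : ℕ := ∑ i, d i * a i

lemma mdeg_injective (hd : ∀ i, 1 ≤ d i) : Function.Injective (mdeg d) := by
  intro a b hab
  ext i
  have := congrArg (fun f => f i) hab
  simp only [mdeg_apply] at this
  exact Nat.eq_of_mul_eq_mul_left (hd i) this

lemma expand (hd : ∀ i, 1 ≤ d i) (hdeg : ∀ i, Small (d i) (h i - X i ^ d i)) :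
    ∀ N (a : Fin n →₀ ℕ), (a.sum fun _ e => e) = N →
    ∃ r : MvPolynomial (Fin n) k,
      (∏ i, h i ^ a i) = monomial (mdeg d a) 1 + r ∧ Small (wt d a) r := by
  intro N
  induction N using Nat.strong_induction_on with
  | _ N IH =>
  intro a ha
  rcases eq_or_ne a 0 with rfl | ha0
  · refine ⟨0, ?_, by simp [Small]⟩
    have h0 : mdeg d 0 = 0 := by ext i; simp [mdeg_apply]
    simp [h0]
  · obtain ⟨i, hi⟩ : ∃ i, a i ≠ 0 := by
      by_contra hcon
      push_neg at hcon
      exact ha0 (Finsupp.ext fun i => hcon i)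
    set a' : Fin n →₀ ℕ := a - Finsupp.single i 1 with ha'def
    have hle : Finsupp.single i 1 ≤ a := by
      rw [Finsupp.le_iff]
      intro j _
      rcases eq_or_ne i j with rfl | hji
      · simpa [Finsupp.single_apply] using Nat.one_le_iff_ne_zero.mpr hi
      · simp [Finsupp.single_apply, hji]
    have hsum : Finsupp.single i 1 + a' = a := by
      rw [ha'def, add_comm]
      exact tsub_add_cancel_of_le hle
    have haa' : ∀ j, a j = a' j + (Finsupp.single i 1) j := by
      intro j
      conv_lhs => rw [← hsum]
      simp [add_comm]
    have hsum' : (a'.sum fun _ e => e) + 1 = N := by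
      rw [← ha, ← hsum, Finsupp.sum_add_index' (fun _ => rfl) (fun _ _ _ => rfl),
        Finsupp.sum_single_index rfl]
      ring
    obtain ⟨r', hr', hr's⟩ := IH (a'.sum fun _ e => e) (by omega) a' rfl
    have hprod : (∏ j, h j ^ a j) = (∏ j, h j ^ a' j) * h i := by
      calc (∏ j, h j ^ a j) = ∏ j, h j ^ a' j * h j ^ (Finsupp.single i 1) j := by
            refine Finset.prod_congr rfl fun j _ => ?_
            rw [← pow_add, ← haa' j]
        _ = (∏ j, h j ^ a' j) * ∏ j, h j ^ (Finsupp.single i 1) j := by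
            rw [Finset.prod_mul_distrib]
        _ = (∏ j, h j ^ a' j) * h i := by
            congr 1
            rw [Finset.prod_eq_single i
              (fun j _ hji => by simp [Finsupp.single_apply, Ne.symm hji])
              (fun habs => absurd (Finset.mem_univ i) habs)]
            simp
    have hwt : wt d a = wt d a' + d i := by
      simp only [wt]
      rw [Finset.sum_congr rfl (fun j _ => by rw [haa' j, Nat.mul_add]),
        Finset.sum_add_distrib]
      congr 1
      rw [Finset.sum_eq_single i
        (fun j _ hji => by simp [Finsupp.single_apply, Ne.symm hji])
        (fun habs => absurd (Finset.mem_univ i) habs)]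
      simp [Finsupp.single_apply]
    have hmdeg : mdeg d a' + Finsupp.single i (d i) = mdeg d a := by
      ext j
      simp only [Finsupp.add_apply, mdeg_apply, Finsupp.single_apply]
      rcases eq_or_ne i j with rfl | hij
      · rw [haa' i]
        simp [Nat.mul_add]
      · simp [hij, Finsupp.single_apply, haa' j, Ne.symm hij]
    set ri : MvPolynomial (Fin n) k := h i - X i ^ d i with hridef
    have hmon : (monomial (mdeg d a') (1:k)) * X i ^ d i = monomial (mdeg d a) 1 := by
      rw [X_pow_eq_monomial, monomial_mul, mul_one, hmdeg]
    refine ⟨monomial (mdeg d a') 1 * ri + r' * X i ^ d i + r' * ri, ?_, ?_⟩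
    · rw [hprod, hr']
      have hhi : h i = X i ^ d i + ri := by rw [hridef]; ring
      rw [hhi, ← hmon]
      ring
    · have hA : Small (wt d a) ((monomial (mdeg d a') (1:k)) * ri) := by
        have := (hdeg i).mul (q := monomial (mdeg d a') (1:k))
          (fun _ => by rw [totalDegree_monomial _ one_ne_zero, mdeg_sum])
        have := this.congr (show d i + wt d a' = wt d a by omega)
        rwa [mul_comm] at this
      have hB : Small (wt d a) (r' * X i ^ d i) := by
        exact (hr's.mul (fun _ => le_of_eq (totalDegree_X_pow i (d i)))).congr hwt.symm
      have hC : Small (wt d a) (r' * ri) := by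
        exact (hr's.mul (fun hne => le_of_lt (hdeg i hne))).congr hwt.symm
      exact (hA.add hB).add hC

lemma aeval_ne_zero (hd : ∀ i, 1 ≤ d i) (hdeg : ∀ i, Small (d i) (h i - X i ^ d i))
    {P : MvPolynomial (Fin n) k} (hP : P ≠ 0) : aeval h P ≠ 0 := by
  classical
  have hexp := fun a : Fin n →₀ ℕ => expand d h hd hdeg (a.sum fun _ e => e) a rfl
  choose r hr hrs using hexp
  have hsupp : P.support.Nonempty := support_nonempty.mpr hP
  obtain ⟨a₀, ha₀, hW⟩ := P.support.exists_mem_eq_sup hsupp (wt d)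
  have hcoeff : coeff (mdeg d a₀) (aeval h P) = coeff a₀ P := by
    conv_lhs => rw [P.as_sum, map_sum]
    rw [coeff_sum]
    have hterm : ∀ a ∈ P.support,
        coeff (mdeg d a₀) (aeval h (monomial a (coeff a P))) =
          if a = a₀ then coeff a₀ P else 0 := by
      intro a ha
      rw [aeval_monomial, algebraMap_eq, Finsupp.prod_pow, hr a, mul_add, C_mul_monomial,
        mul_one, coeff_add, coeff_C_mul]
      have hzero : coeff (mdeg d a₀) (r a) = 0 := by
        rcases eq_or_ne (r a) 0 with h0 | h0
        · simp [h0]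
        · apply coeff_eq_zero_of_totalDegree_lt
          have h1 : (r a).totalDegree < wt d a := hrs a h0
          have h2 : wt d a ≤ P.support.sup (wt d) := Finset.le_sup ha
          have h3 : (∑ j ∈ (mdeg d a₀).support, mdeg d a₀ j) = wt d a₀ := by
            have := mdeg_sum d a₀
            rw [Finsupp.sum] at this
            rw [this]; rfl
          rw [h3, ← hW]
          omega
      rw [hzero, mul_zero, add_zero, coeff_monomial]
      by_cases hcase : a = a₀
      · subst hcase; simp
      · rw [if_neg hcase, if_neg (fun habs => hcase (mdeg_injective d hd habs))]
    rw [Finset.sum_congr rfl hterm, Finset.sum_ite_eq' P.support a₀ fun _ => coeff a₀ P,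
      if_pos ha₀]
  intro hzero
  rw [hzero, coeff_zero] at hcoeff
  exact mem_support_iff.mp ha₀ hcoeff.symm

lemma finite_aeval (hd : ∀ i, 1 ≤ d i) (hdeg : ∀ i, Small (d i) (h i - X i ^ d i)) :
    ((aeval h : MvPolynomial (Fin n) k →ₐ[k] MvPolynomial (Fin n) k) :
      MvPolynomial (Fin n) k →+* MvPolynomial (Fin n) k).Finite := by
  classical
  set f : MvPolynomial (Fin n) k →+* MvPolynomial (Fin n) k :=
    ((aeval h : MvPolynomial (Fin n) k →ₐ[k] MvPolynomial (Fin n) k) :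
      MvPolynomial (Fin n) k →+* MvPolynomial (Fin n) k) with hfdef
  letI : Algebra (MvPolynomial (Fin n) k) (MvPolynomial (Fin n) k) := f.toAlgebra
  letI : Module (MvPolynomial (Fin n) k) (MvPolynomial (Fin n) k) := Algebra.toModule
  letI : SMul (MvPolynomial (Fin n) k) (MvPolynomial (Fin n) k) := Algebra.toSMul
  set G : Finset (MvPolynomial (Fin n) k) :=
    (Fintype.piFinset fun i => Finset.range (d i)).image
      (fun v => monomial (Finsupp.equivFunOnFinite.symm v) (1:k)) with hGdef
  have hsmul : ∀ (t q : MvPolynomial (Fin n) k), t • q = aeval h t * q := by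
    intro t q
    rw [Algebra.smul_def, RingHom.algebraMap_toAlgebra]
    rfl
  have key : ∀ N (p : MvPolynomial (Fin n) k), p.totalDegree ≤ N →
      p ∈ Submodule.span (MvPolynomial (Fin n) k) (G : Set (MvPolynomial (Fin n) k)) := by
    intro N
    induction N using Nat.strong_induction_on with
    | _ N IH =>
    intro p hp
    rw [p.as_sum]
    refine Submodule.sum_mem _ fun e he => ?_
    have hc : coeff e p ≠ 0 := mem_support_iff.mp he
    have hdegle : (e.sum fun _ x => x) ≤ N := le_trans (le_totalDegree he) hp
    by_cases hcase : ∀ i, e i < d i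
    · have hmem : monomial e (1:k) ∈ G := by
        rw [hGdef]
        apply Finset.mem_image.mpr
        exact ⟨⇑e, by simpa [Fintype.mem_piFinset] using hcase,
          by rw [Finsupp.equivFunOnFinite_symm_coe]⟩
      have heq : monomial e (coeff e p) =
          (C (coeff e p) : MvPolynomial (Fin n) k) • monomial e (1:k) := by
        rw [hsmul, aeval_C, algebraMap_eq, C_mul_monomial, mul_one]
      rw [heq]
      exact Submodule.smul_mem _ _ (Submodule.subset_span hmem)
    · push_neg at hcase
      obtain ⟨i, hi⟩ := hcase
      set e' : Fin n →₀ ℕ := e - Finsupp.single i (d i) with he'def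
      have hle : Finsupp.single i (d i) ≤ e := by
        rw [Finsupp.le_iff]
        intro j _
        rcases eq_or_ne i j with rfl | hji
        · simpa [Finsupp.single_apply] using hi
        · simp [Finsupp.single_apply, hji]
      have hsum : Finsupp.single i (d i) + e' = e := by
        rw [he'def, add_comm]
        exact tsub_add_cancel_of_le hle
      have hesum : (e'.sum fun _ x => x) + d i = (e.sum fun _ x => x) := by
        rw [← hsum, Finsupp.sum_add_index' (fun _ => rfl) (fun _ _ _ => rfl),
          Finsupp.sum_single_index rfl]
        ring
      have heisum : d i ≤ (e.sum fun _ x => x) := by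
        refine le_trans hi ?_
        refine Finset.single_le_sum (f := fun j => e j) (fun _ _ => Nat.zero_le _) ?_
        refine Finsupp.mem_support_iff.mpr ?_
        have := hd i
        omega
      have hkey : monomial e (coeff e p) =
          (X i : MvPolynomial (Fin n) k) • monomial e' (coeff e p) -
            (h i - X i ^ d i) * monomial e' (coeff e p) := by
        rw [hsmul, aeval_X]
        have hring : h i * monomial e' (coeff e p) -
            (h i - X i ^ d i) * monomial e' (coeff e p) =
            X i ^ d i * monomial e' (coeff e p) := by ring
        rw [hring, X_pow_eq_monomial, monomial_mul, one_mul, hsum]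
      rw [hkey]
      have hdi := hd i
      refine sub_mem (Submodule.smul_mem _ _ (IH (e'.sum fun _ x => x) (by omega) _ ?_))
        (IH (N - 1) (by omega) _ ?_)
      · exact le_of_eq (totalDegree_monomial _ hc)
      · rcases eq_or_ne (h i - X i ^ d i) 0 with h0 | h0
        · rw [h0, zero_mul, totalDegree_zero]
          omega
        · refine le_trans (totalDegree_mul _ _) ?_
          have h1 : (h i - X i ^ d i).totalDegree < d i := hdeg i h0
          have h2 : (monomial e' (coeff e p)).totalDegree = (e'.sum fun _ x => x) :=
            totalDegree_monomial _ hc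
          omega
  have hM : Module.Finite (MvPolynomial (Fin n) k) (MvPolynomial (Fin n) k) := by
    refine ⟨⟨G, ?_⟩⟩
    rw [eq_top_iff]
    rintro p -
    exact key p.totalDegree p le_rfl
  exact hM

end Cor53Aux

/-- The finiteness (and nonemptiness) of the common zero set underlying
Corollary 5.3 of the paper. -/
theorem common_zero_set_finite_of_monic_in_own_variable
    (k : Type*) [Field k] [IsAlgClosed k] (n : ℕ) (hn : 1 ≤ n)
    (h : Fin n → MvPolynomial (Fin n) k)
    (hdeg : ∀ i : Fin n, ∃ d : ℕ, 1 ≤ d ∧ (h i - X i ^ d).totalDegree < d) :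
    {z : Fin n → k | ∀ i : Fin n, eval z (h i) = 0}.Finite ∧
      {z : Fin n → k | ∀ i : Fin n, eval z (h i) = 0}.Nonempty := by
  classical
  choose d hd1 hd2 using hdeg
  have hdeg' : ∀ i, Cor53Aux.Small (d i) (h i - X i ^ d i) := fun i _ => hd2 i
  set f : MvPolynomial (Fin n) k →+* MvPolynomial (Fin n) k :=
    ((aeval h : MvPolynomial (Fin n) k →ₐ[k] MvPolynomial (Fin n) k) :
      MvPolynomial (Fin n) k →+* MvPolynomial (Fin n) k) with hfdef
  have hfeval : ∀ q, f q = aeval h q := fun q => rfl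
  have hinj : Function.Injective f := by
    intro p q hpq
    by_contra hne
    refine Cor53Aux.aeval_ne_zero d h hd1 hdeg' (sub_ne_zero.mpr hne) ?_
    rw [map_sub, sub_eq_zero]
    exact hpq
  have hfin := Cor53Aux.finite_aeval d h hd1 hdeg'
  have hint : f.IsIntegral := hfin.to_isIntegral
  set Z := {z : Fin n → k | ∀ i : Fin n, eval z (h i) = 0} with hZdef
  have hZloc : Z = MvPolynomial.zeroLocus k (Ideal.span (Set.range h)) := by
    rw [zeroLocus_span]
    ext z
    simp [hZdef]
  have hproper : Ideal.span (Set.range h) ≠ ⊤ := by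
    have hmapspan : Ideal.map f
        (Ideal.span (Set.range (X : Fin n → MvPolynomial (Fin n) k))) =
        Ideal.span (Set.range h) := by
      rw [Ideal.map_span, ← Set.range_comp]
      congr 1
      exact congrArg Set.range (funext fun i => by rw [Function.comp_apply, hfeval, aeval_X])
    have hXproper :
        Ideal.span (Set.range (X : Fin n → MvPolynomial (Fin n) k)) ≠ ⊤ := by
      intro htop
      have hle : Ideal.span (Set.range (X : Fin n → MvPolynomial (Fin n) k)) ≤
          vanishingIdeal k ({(0 : Fin n → k)} : Set (Fin n → k)) := by
        rw [Ideal.span_le]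
        rintro _ ⟨i, rfl⟩
        rw [SetLike.mem_coe, mem_vanishingIdeal_singleton_iff]
        simp
      rw [htop] at hle
      exact (inferInstance : (vanishingIdeal k ({(0 : Fin n → k)} : Set (Fin n → k)) :
          Ideal (MvPolynomial (Fin n) k)).IsMaximal).ne_top
        (top_le_iff.mp hle)
    rw [← hmapspan]
    intro htop
    refine hXproper ((Ideal.map_eq_top_iff_of_ker_le f ?_ hint).mp htop)
    rw [(RingHom.injective_iff_ker_eq_bot f).mp hinj]
    exact bot_le
  have hne : Z.Nonempty := by
    rw [hZloc]
    rcases Set.eq_empty_or_nonempty (zeroLocus k (Ideal.span (Set.range h))) with hemp | hne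
    · exfalso
      have hrad := vanishingIdeal_zeroLocus_eq_radical (K := k) (Ideal.span (Set.range h))
      rw [hemp, vanishingIdeal_empty] at hrad
      exact hproper (Ideal.radical_eq_top.mp hrad.symm)
    · exact hne
  choose p hpmonic hproot using fun i => hint (X i)
  set φ : MvPolynomial (Fin n) k →+* k := (eval (0 : Fin n → k)) with hφdef
  have hsub : Z ⊆ Set.pi Set.univ fun i => {x : k | ((p i).map φ).IsRoot x} := by
    intro z hz i _
    have hcomp : ((eval z : MvPolynomial (Fin n) k →+* k)).comp f = φ := by
      apply ringHom_ext
      · intro c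
        simp only [RingHom.comp_apply, hfeval, aeval_C, algebraMap_eq, hφdef]
        simp
      · intro j
        simp only [RingHom.comp_apply, hfeval, aeval_X, hφdef]
        simpa using hz j
    have hev : Polynomial.eval₂ (((eval z : MvPolynomial (Fin n) k →+* k)).comp f)
        ((eval z) (X i)) (p i) = 0 := by
      rw [← Polynomial.hom_eval₂, hproot i, map_zero]
    rw [hcomp, eval_X] at hev
    show ((p i).map φ).IsRoot (z i)
    rw [Polynomial.IsRoot, Polynomial.eval_map]
    exact hev
  refine ⟨Set.Finite.subset (Set.Finite.pi fun i =>
    Polynomial.finite_setOf_isRoot ?_) hsub, hne⟩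
  exact ((hpmonic i).map φ).ne_zero
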